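/- For real σ with 1 < σ ≤ 1.06 and any real t, one has |ζ'(σ+it)/ζ(σ+it)| < 1/(σ-1). -/

import Mathlib

open Real Filter

private lemma hasDerivAt_G (σ : ℝ) (hσ : 1 < σ) {y : ℝ} (hy : 0 < y) :
    HasDerivAt (fun x : ℝ => x ^ (1-σ) / (σ-1)) (-(y ^ (-σ))) y := by
  have h := (Real.hasDerivAt_rpow_const (x := y) (p := 1-σ) (Or.inl hy.ne')).div_const (σ-1)
  refine h.congr_deriv ?_
  rw [show (1:ℝ)-σ-1 = -σ by ring]
  have h0 : σ - 1 ≠ 0 := by linarith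
  field_simp
  ring

private lemma step_Z (σ : ℝ) (hσ : 1 < σ) {x : ℝ} (hx : 0 < x) :
    x ^ (1-σ) / (σ-1) - (x+1) ^ (1-σ) / (σ-1) ≤ x ^ (-σ) := by
  obtain ⟨c, hc, hc'⟩ := exists_hasDerivAt_eq_slope (fun y : ℝ => y ^ (1-σ) / (σ-1))
    (fun y => -(y ^ (-σ))) (lt_add_one x)
    (fun y hy => (hasDerivAt_G σ hσ (lt_of_lt_of_le hx hy.1)).continuousAt.continuousWithinAt)
    (fun y hy => hasDerivAt_G σ hσ (lt_trans hx hy.1))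
  have h2 : x + 1 - x = 1 := by ring
  rw [h2, div_one] at hc'
  have : x ^ (1-σ) / (σ-1) - (x+1) ^ (1-σ) / (σ-1) = c ^ (-σ) := by linarith
  rw [this]
  exact Real.rpow_le_rpow_of_nonpos hx hc.1.le (by linarith)

private lemma hasDerivAt_F (σ : ℝ) (hσ : 1 < σ) {y : ℝ} (hy : 0 < y) :
    HasDerivAt (fun x : ℝ => x ^ (1-σ) * Real.log x / (σ-1) + x ^ (1-σ) / (σ-1)^2)
      (-(Real.log y * y ^ (-σ))) y := by
  have h1 : HasDerivAt (fun x : ℝ => x ^ (1-σ)) ((1-σ) * y ^ (-σ)) y := by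
    have := Real.hasDerivAt_rpow_const (x := y) (p := 1-σ) (Or.inl hy.ne')
    rwa [show (1:ℝ)-σ-1 = -σ by ring] at this
  have hlog : HasDerivAt Real.log y⁻¹ y := Real.hasDerivAt_log hy.ne'
  have h := ((h1.mul hlog).div_const (σ-1)).add (h1.div_const ((σ-1)^2))
  refine h.congr_deriv ?_
  have hys : y ^ (1-σ) = y * y ^ (-σ) := by
    rw [show (1:ℝ)-σ = 1 + -σ by ring, Real.rpow_add hy, Real.rpow_one]
  rw [hys]
  have h0 : σ - 1 ≠ 0 := by linarith
  have hyy : y * y ^ (-σ) * y⁻¹ = y ^ (-σ) := by field_simp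
  rw [hyy]
  field_simp
  ring

private lemma f_anti (σ : ℝ) (hσ : 1 ≤ σ) :
    AntitoneOn (fun y : ℝ => Real.log y * y ^ (-σ)) (Set.Ici 3) := by
  have h3 : (1:ℝ) < Real.log 3 := by
    rw [Real.lt_log_iff_exp_lt (by norm_num)]
    calc Real.exp 1 < 2.7182818286 := Real.exp_one_lt_d9
    _ < 3 := by norm_num
  have hder : ∀ y : ℝ, 3 ≤ y →
      HasDerivAt (fun y : ℝ => Real.log y * y ^ (-σ))
        (y⁻¹ * y ^ (-σ) + Real.log y * (-σ * y ^ (-σ-1))) y := by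
    intro y hy
    have hy0 : (0:ℝ) < y := by linarith
    have h1 : HasDerivAt (fun x : ℝ => x ^ (-σ)) (-σ * y ^ (-σ-1)) y :=
      Real.hasDerivAt_rpow_const (Or.inl hy0.ne')
    exact (Real.hasDerivAt_log hy0.ne').mul h1
  refine antitoneOn_of_deriv_nonpos (convex_Ici 3)
    (fun y hy => ((hder y hy).continuousAt.continuousWithinAt))
    (fun y hy => ((hder y (le_of_lt (by simpa using hy))).differentiableAt.differentiableWithinAt))
    (fun y hy => ?_)
  rw [interior_Ici] at hy
  have hy3 : (3:ℝ) < y := hy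
  have hy0 : (0:ℝ) < y := by linarith
  rw [(hder y hy3.le).deriv]
  have hA : y⁻¹ * y ^ (-σ) = y ^ (-σ-1) := by
    rw [show -σ-1 = -σ + -1 by ring, Real.rpow_add hy0, Real.rpow_neg_one]
    ring
  rw [hA]
  have hApos : 0 < y ^ (-σ-1) := Real.rpow_pos_of_pos hy0 _
  have hlogy : 1 < Real.log y := lt_of_lt_of_le h3 (Real.log_le_log (by norm_num) hy3.le)
  have : 1 ≤ σ * Real.log y := by nlinarith
  nlinarith

private lemma step_B (σ : ℝ) (hσ : 1 < σ) {x : ℝ} (hx : 3 ≤ x) :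
    Real.log (x+1) * (x+1) ^ (-σ) ≤
      (x ^ (1-σ) * Real.log x / (σ-1) + x ^ (1-σ) / (σ-1)^2)
        - ((x+1) ^ (1-σ) * Real.log (x+1) / (σ-1) + (x+1) ^ (1-σ) / (σ-1)^2) := by
  have hx0 : (0:ℝ) < x := by linarith
  obtain ⟨c, hc, hc'⟩ := exists_hasDerivAt_eq_slope
    (fun x : ℝ => x ^ (1-σ) * Real.log x / (σ-1) + x ^ (1-σ) / (σ-1)^2)
    (fun y => -(Real.log y * y ^ (-σ))) (lt_add_one x)
    (fun y hy => (hasDerivAt_F σ hσ (lt_of_lt_of_le hx0 hy.1)).continuousAt.continuousWithinAt)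
    (fun y hy => hasDerivAt_F σ hσ (lt_trans hx0 hy.1))
  have h2 : x + 1 - x = 1 := by ring
  rw [h2, div_one] at hc'
  have heq : (x ^ (1-σ) * Real.log x / (σ-1) + x ^ (1-σ) / (σ-1)^2)
      - ((x+1) ^ (1-σ) * Real.log (x+1) / (σ-1) + (x+1) ^ (1-σ) / (σ-1)^2)
      = Real.log c * c ^ (-σ) := by linarith
  rw [heq]
  exact f_anti σ hσ.le (Set.mem_Ici.mpr (by linarith [hc.1])) (Set.mem_Ici.mpr (by linarith [hc.2]))
    (by linarith [hc.2])

private lemma hasSum_telescope_of_nonneg {u : ℕ → ℝ} (hnn : ∀ k, u (k+1) ≤ u k)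
    (h0 : Filter.Tendsto u atTop (nhds 0)) : HasSum (fun k => u k - u (k+1)) (u 0) := by
  rw [hasSum_iff_tendsto_nat_of_nonneg (fun i => by linarith [hnn i])]
  have : (fun n : ℕ => ∑ i ∈ Finset.range n, (u i - u (i+1))) = fun n => u 0 - u n := by
    funext n; exact Finset.sum_range_sub' u n
  rw [this]
  simpa using tendsto_const_nhds.sub h0

open Real

private lemma key_arith {ε e2 e3 l2 l3 A Z B : ℝ}
    (hεpos : 0 < ε) (hε6 : ε ≤ 0.06)
    (he3le1 : e3 ≤ 1) (he2pos : 0 < e2)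
    (hl2pos : 0 < l2) (hl2lt : l2 < 0.6931471808) (hl23 : l2 ≤ l3) (hl3le : l3 ≤ 2*l2)
    (hkey : e3 * (1 + ε*(l3-l2)) ≤ e2)
    (hAZB : B = A * Z) (hA0 : 0 ≤ A)
    (hZ : 1 + e2/ε ≤ Z)
    (hB : B ≤ l2/2 + l3/3 + (e3*l3/ε + e3/ε^2)) :
    A < 1/ε := by
  have hBpoly : B * ε^2 ≤ (l2/2 + l3/3) * ε^2 + e3 * l3 * ε + e3 := by
    have h9 := mul_le_mul_of_nonneg_right hB (le_of_lt (by positivity : (0:ℝ) < ε^2))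
    calc B * ε^2 ≤ (l2/2 + l3/3 + (e3 * l3 / ε + e3 / ε^2)) * ε^2 := h9
    _ = (l2/2 + l3/3) * ε^2 + e3 * l3 * (ε^2/ε) + e3 * (ε^2/ε^2) := by ring
    _ = (l2/2 + l3/3) * ε^2 + e3 * l3 * ε + e3 := by
        rw [div_self (by positivity : (ε:ℝ)^2 ≠ 0), sq, mul_div_assoc,
          div_self hεpos.ne', mul_one, mul_one]
  have hZpoly : ε + e2 ≤ Z * ε := by
    have h9 := mul_le_mul_of_nonneg_right hZ hεpos.le
    calc ε + e2 = (1 + e2/ε) * ε := by field_simp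
    _ ≤ Z * ε := h9
  have h5 : ε * (e3 * l2) ≤ ε * l2 :=
    mul_le_mul_of_nonneg_left (by nlinarith : e3 * l2 ≤ l2) hεpos.le
  have h6 : (l2/2 + l3/3) * ε + l2 < 1 := by
    have hc0 : 0 ≤ l2/2 + l3/3 := by linarith
    have := mul_le_mul_of_nonneg_left hε6 hc0
    nlinarith
  have h7 : ε * ((l2/2 + l3/3) * ε + l2) < ε := by
    have := mul_lt_mul_of_pos_left h6 hεpos
    simpa using this
  have hmain : (l2/2 + l3/3) * ε^2 + e3 * l3 * ε + e3 < ε + e2 := by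
    nlinarith [hkey, h5, h7]
  have hZpos : 0 < Z := by
    have : 0 < e2 / ε := div_pos he2pos hεpos
    linarith
  have hBZ : A * Z * ε^2 < Z * ε := by rw [← hAZB]; linarith
  have hZε : 0 < Z * ε := mul_pos hZpos hεpos
  have h8 : A * ε * (Z * ε) < 1 * (Z * ε) := by nlinarith [hBZ]
  have h10 : A * ε < 1 := lt_of_mul_lt_mul_right (by linarith) hZε.le
  rw [lt_div_iff₀ hεpos]
  exact h10

private lemma key_real (σ : ℝ) (h1 : 1 < σ) (h2 : σ ≤ 1.06)
    {A Z B : ℝ} (hAZB : B = A * Z) (hA0 : 0 ≤ A)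
    (hZ : 1 + (2:ℝ) ^ (1-σ) / (σ-1) ≤ Z)
    (hB : B ≤ Real.log 2 / (2:ℝ)^σ + Real.log 3 / (3:ℝ)^σ
      + ((3:ℝ) ^ (1-σ) * Real.log 3 / (σ-1) + (3:ℝ) ^ (1-σ) / (σ-1)^2)) :
    A < 1 / (σ-1) := by
  have hεpos : 0 < σ - 1 := by linarith
  have he2pos : (0:ℝ) < (2:ℝ) ^ (1-σ) := rpow_pos_of_pos (by norm_num) _
  have he3pos : (0:ℝ) < (3:ℝ) ^ (1-σ) := rpow_pos_of_pos (by norm_num) _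
  have he3le1 : (3:ℝ) ^ (1-σ) ≤ 1 :=
    rpow_le_one_of_one_le_of_nonpos (by norm_num) (by linarith)
  have hl2pos : 0 < Real.log 2 := Real.log_pos (by norm_num)
  have hl23 : Real.log 2 ≤ Real.log 3 := Real.log_le_log (by norm_num) (by norm_num)
  have hl3le : Real.log 3 ≤ 2 * Real.log 2 := by
    have h4 : Real.log 3 ≤ Real.log 4 := Real.log_le_log (by norm_num) (by norm_num)
    have h4' : Real.log 4 = 2 * Real.log 2 := by
      rw [show (4:ℝ) = 2^2 by norm_num, Real.log_pow]; push_cast; ring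
    linarith
  have hkey : (3:ℝ) ^ (1-σ) * (1 + (σ-1) * (Real.log 3 - Real.log 2)) ≤ (2:ℝ) ^ (1-σ) := by
    have h32 : (3:ℝ) ^ (1-σ) * ((3/2:ℝ) ^ (σ-1)) = (2:ℝ) ^ (1-σ) := by
      rw [Real.div_rpow (by norm_num) (by norm_num), ← mul_div_assoc,
        ← Real.rpow_add (by norm_num : (0:ℝ) < 3), show 1 - σ + (σ-1) = 0 by ring,
        Real.rpow_zero, show (1:ℝ) - σ = -(σ-1) by ring, Real.rpow_neg (by norm_num),
        one_div]
    have hexp : 1 + (σ-1) * (Real.log 3 - Real.log 2) ≤ (3/2:ℝ) ^ (σ-1) := by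
      rw [Real.rpow_def_of_pos (by norm_num),
        Real.log_div (by norm_num) (by norm_num)]
      calc 1 + (σ-1) * (Real.log 3 - Real.log 2)
          = (Real.log 3 - Real.log 2) * (σ-1) + 1 := by ring
      _ ≤ Real.exp ((Real.log 3 - Real.log 2) * (σ-1)) := Real.add_one_le_exp _
    calc (3:ℝ) ^ (1-σ) * (1 + (σ-1) * (Real.log 3 - Real.log 2))
        ≤ (3:ℝ) ^ (1-σ) * ((3/2:ℝ) ^ (σ-1)) := mul_le_mul_of_nonneg_left hexp he3pos.le
    _ = (2:ℝ) ^ (1-σ) := h32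
  have h2σ : (2:ℝ) ≤ (2:ℝ)^σ := by
    calc (2:ℝ) = (2:ℝ)^(1:ℝ) := (rpow_one 2).symm
    _ ≤ (2:ℝ)^σ := rpow_le_rpow_of_exponent_le (by norm_num) h1.le
  have h3σ : (3:ℝ) ≤ (3:ℝ)^σ := by
    calc (3:ℝ) = (3:ℝ)^(1:ℝ) := (rpow_one 3).symm
    _ ≤ (3:ℝ)^σ := rpow_le_rpow_of_exponent_le (by norm_num) h1.le
  have ht2 : Real.log 2 / (2:ℝ)^σ ≤ Real.log 2 / 2 :=
    div_le_div_of_nonneg_left hl2pos.le (by norm_num) h2σ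
  have ht3 : Real.log 3 / (3:ℝ)^σ ≤ Real.log 3 / 3 :=
    div_le_div_of_nonneg_left (by linarith) (by norm_num) h3σ
  exact key_arith hεpos (by linarith) he3le1 he2pos hl2pos Real.log_two_lt_d9 hl23 hl3le
    hkey hAZB hA0 hZ (by linarith)

private lemma term_eq_ofReal (r : ℕ → ℝ) (σ : ℝ) (n : ℕ) :
    LSeries.term (fun m => ((r m : ℝ) : ℂ)) (σ:ℂ) n
      = ((if n = 0 then (0:ℝ) else r n / (n:ℝ)^σ : ℝ) : ℂ) := by
  rcases eq_or_ne n 0 with rfl | hn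
  · simp [LSeries.term_zero]
  · rw [LSeries.term_of_ne_zero hn, if_neg hn, Complex.ofReal_div,
      Complex.ofReal_cpow (Nat.cast_nonneg n), Complex.ofReal_natCast]

private lemma LSeries_ofReal (r : ℕ → ℝ) (σ : ℝ) :
    LSeries (fun m => ((r m : ℝ) : ℂ)) (σ:ℂ)
      = ((∑' n : ℕ, if n = 0 then (0:ℝ) else r n / (n:ℝ)^σ : ℝ) : ℂ) := by
  rw [Complex.ofReal_tsum]
  exact tsum_congr (term_eq_ofReal r σ)

theorem log_deriv_zeta_bound (σ t : ℝ) (h1 : 1 < σ) (h2 : σ ≤ 1.06) :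
    ‖deriv riemannZeta (σ + t * Complex.I) / riemannZeta (σ + t * Complex.I)‖
      < 1 / (σ - 1) := by
  have hε : 0 < σ - 1 := by linarith
  set s : ℂ := ↑σ + ↑t * Complex.I with hsdef
  have hsre : s.re = σ := by simp [hsdef]
  have h1s : 1 < s.re := by rw [hsre]; exact h1
  have h1σ : 1 < ((σ:ℂ)).re := by rw [Complex.ofReal_re]; exact h1
  -- real sequences
  set a : ℕ → ℝ := fun n => if n = 0 then (0:ℝ)
    else ArithmeticFunction.vonMangoldt n / (n:ℝ)^σ with hadef
  set z : ℕ → ℝ := fun n => if n = 0 then (0:ℝ) else 1 / (n:ℝ)^σ with hzdef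
  set b : ℕ → ℝ := fun n => if n = 0 then (0:ℝ) else Real.log n / (n:ℝ)^σ with hbdef
  -- complex summabilities
  have hΛs : LSeriesSummable (fun n => ((ArithmeticFunction.vonMangoldt n : ℝ) : ℂ)) s :=
    ArithmeticFunction.LSeriesSummable_vonMangoldt h1s
  have hΛσ : LSeriesSummable (fun n => ((ArithmeticFunction.vonMangoldt n : ℝ) : ℂ)) (σ:ℂ) :=
    ArithmeticFunction.LSeriesSummable_vonMangoldt h1σ
  have h1sum : LSeriesSummable 1 (σ:ℂ) := LSeriesSummable_one_iff.mpr h1σ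
  have hlogeq : ∀ {n : ℕ}, n ≠ 0 → (1 : ℕ → ℂ) n = ((((fun _ => (1:ℝ)) n) : ℝ) : ℂ) := by
    intro n _; simp
  have hlogsum : LSeriesSummable (fun n : ℕ => ((Real.log n : ℝ) : ℂ)) (σ:ℂ) := by
    have h0 : LSeriesSummable (LSeries.logMul 1) (σ:ℂ) :=
      LSeriesSummable_logMul_of_lt_re
        (by rw [LSeries.abscissaOfAbsConv_one]; exact_mod_cast h1σ)
    refine (LSeriesSummable_congr (f := LSeries.logMul 1) _ fun {n} hn => ?_).mp h0
    simp only [LSeries.logMul, Pi.one_apply, mul_one]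
    rw [← Complex.ofReal_natCast, Complex.ofReal_log (Nat.cast_nonneg n)]
  -- norms of terms are the real sequences
  have hterma : ∀ (w : ℂ), w.re = σ → ∀ n,
      ‖LSeries.term (fun m => ((ArithmeticFunction.vonMangoldt m : ℝ) : ℂ)) w n‖ = a n := by
    intro w hw n
    rw [LSeries.norm_term_eq, hw]
    rcases eq_or_ne n 0 with rfl | hn
    · simp [hadef]
    · simp only [hadef, if_neg hn, Complex.norm_real,
        Real.norm_of_nonneg ArithmeticFunction.vonMangoldt_nonneg]
  have htermz : ∀ n, ‖LSeries.term (1 : ℕ → ℂ) (σ:ℂ) n‖ = z n := by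
    intro n
    rw [LSeries.norm_term_eq, Complex.ofReal_re]
    rcases eq_or_ne n 0 with rfl | hn
    · simp [hzdef]
    · simp only [hzdef, if_neg hn, Pi.one_apply, norm_one]
  have htermb : ∀ n, ‖LSeries.term (fun m : ℕ => ((Real.log m : ℝ) : ℂ)) (σ:ℂ) n‖ = b n := by
    intro n
    rw [LSeries.norm_term_eq, Complex.ofReal_re]
    rcases eq_or_ne n 0 with rfl | hn
    · simp [hbdef]
    · simp only [hbdef, if_neg hn, Complex.norm_real,
        Real.norm_of_nonneg (Real.log_natCast_nonneg n)]
  -- real summabilities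
  have hsa : Summable a := by
    have := summable_norm_iff.mpr hΛσ
    exact this.congr (hterma (σ:ℂ) (Complex.ofReal_re σ))
  have hsz : Summable z := (summable_norm_iff.mpr h1sum).congr htermz
  have hsb : Summable b := (summable_norm_iff.mpr hlogsum).congr htermb
  set A : ℝ := ∑' n, a n with hAdef
  set Z : ℝ := ∑' n, z n with hZdef
  set B : ℝ := ∑' n, b n with hBdef
  have hA0 : 0 ≤ A := tsum_nonneg fun n => by
    rw [hadef]; dsimp only; split
    · exact le_refl 0
    · exact div_nonneg ArithmeticFunction.vonMangoldt_nonneg (Real.rpow_nonneg (Nat.cast_nonneg n) σ)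
  -- step 1 : |ζ'/ζ| ≤ A
  have hAbound : ‖deriv riemannZeta s / riemannZeta s‖ ≤ A := by
    have hLd := ArithmeticFunction.LSeries_vonMangoldt_eq_deriv_riemannZeta_div h1s
    have heq : deriv riemannZeta s / riemannZeta s
        = -(LSeries (fun n => ((ArithmeticFunction.vonMangoldt n : ℝ) : ℂ)) s) := by
      rw [hLd]; ring
    rw [heq, norm_neg]
    calc ‖LSeries (fun n => ((ArithmeticFunction.vonMangoldt n : ℝ) : ℂ)) s‖
        ≤ ∑' n, ‖LSeries.term (fun n => ((ArithmeticFunction.vonMangoldt n : ℝ) : ℂ)) s n‖ :=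
          norm_tsum_le_tsum_norm (summable_norm_iff.mpr hΛs)
    _ = A := tsum_congr (hterma s hsre)
  -- step 2 : complex identities, B = A * Z
  have hAc : LSeries (fun n => ((ArithmeticFunction.vonMangoldt n : ℝ) : ℂ)) (σ:ℂ) = (A:ℂ) := by
    rw [LSeries_ofReal, hAdef]
  have hZc : LSeries (1 : ℕ → ℂ) (σ:ℂ) = (Z:ℂ) := by
    rw [LSeries_congr hlogeq (σ:ℂ), LSeries_ofReal, hZdef]
  have hBc : LSeries (fun n : ℕ => Complex.log n) (σ:ℂ) = (B:ℂ) := by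
    have : LSeries (fun n : ℕ => Complex.log n) (σ:ℂ)
        = LSeries (fun n : ℕ => ((Real.log n : ℝ) : ℂ)) (σ:ℂ) := by
      refine LSeries_congr (fun {n} hn => ?_) _
      rw [← Complex.ofReal_natCast, Complex.ofReal_log (Nat.cast_nonneg n)]
    rw [this, LSeries_ofReal, hBdef]
  have hconv := LSeries_convolution' hΛσ h1sum
  rw [ArithmeticFunction.convolution_vonMangoldt_const_one] at hconv
  have hBAZ : B = A * Z := by
    have : (B:ℂ) = (A:ℂ) * (Z:ℂ) := by
      rw [← hAc, ← hZc, ← hBc]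
      exact hconv
    exact_mod_cast this
  -- step 3 : lower bound for Z
  set u : ℕ → ℝ := fun k => ((k:ℝ)+2) ^ (1-σ) / (σ-1) with hudef
  have hu_anti : ∀ k, u (k+1) ≤ u k := by
    intro k
    rw [hudef]
    have hnum : (((k:ℕ)+1:ℕ):ℝ) + 2 = ((k:ℝ)+2) + 1 := by push_cast; ring
    dsimp only
    rw [hnum]
    exact div_le_div_of_nonneg_right
      (Real.rpow_le_rpow_of_nonpos (by positivity) (by linarith) (by linarith)) hε.le
  have hu0 : Filter.Tendsto u Filter.atTop (nhds 0) := by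
    have hc : Filter.Tendsto (fun k:ℕ => (k:ℝ)+2) Filter.atTop Filter.atTop :=
      Filter.tendsto_atTop_add_const_right _ _ tendsto_natCast_atTop_atTop
    have h := ((tendsto_rpow_neg_atTop hε).comp hc).div_const (σ-1)
    have hfun : u = fun k : ℕ => ((k:ℝ)+2) ^ (-(σ-1)) / (σ-1) := by
      funext k; rw [hudef]; dsimp only; rw [show -(σ-1) = 1-σ by ring]
    rw [hfun]
    simpa using h
  have htelZ : HasSum (fun k => u k - u (k+1)) (u 0) := hasSum_telescope_of_nonneg hu_anti hu0
  have hstepZ : ∀ k : ℕ, u k - u (k+1) ≤ z (k+2) := by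
    intro k
    have hx : (0:ℝ) < (k:ℝ)+2 := by positivity
    have hz2 : z (k+2) = ((k:ℝ)+2) ^ (-σ) := by
      rw [hzdef]; dsimp only
      rw [if_neg (by omega), Real.rpow_neg hx.le, one_div]
      norm_num
    have hu1 : u (k+1) = (((k:ℝ)+2)+1) ^ (1-σ) / (σ-1) := by
      rw [hudef]; dsimp only; norm_num; ring_nf
    rw [hz2, hu1]
    exact step_Z σ h1 hx
  have hZtail : u 0 ≤ ∑' k, z (k+2) := by
    rw [← htelZ.tsum_eq]
    exact htelZ.summable.tsum_le_tsum hstepZ ((summable_nat_add_iff 2).mpr hsz)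
  have hZlow : 1 + (2:ℝ) ^ (1-σ) / (σ-1) ≤ Z := by
    have hsplit := Summable.sum_add_tsum_nat_add 2 hsz
    have hz01 : ∑ i ∈ Finset.range 2, z i = 1 := by
      rw [hzdef]
      simp [Finset.sum_range_succ]
    have hu0v : u 0 = (2:ℝ) ^ (1-σ) / (σ-1) := by
      rw [hudef]; norm_num
    rw [hZdef, ← hsplit, hz01]
    linarith [hZtail, hu0v]
  -- step 4 : upper bound for B
  set v : ℕ → ℝ := fun k => ((k:ℝ)+3) ^ (1-σ) * Real.log ((k:ℝ)+3) / (σ-1)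
    + ((k:ℝ)+3) ^ (1-σ) / (σ-1)^2 with hvdef
  have hstepB : ∀ k : ℕ, b (k+4) ≤ v k - v (k+1) := by
    intro k
    have hx : (3:ℝ) ≤ (k:ℝ)+3 := by linarith [Nat.cast_nonneg (α := ℝ) k]
    have hx1 : (0:ℝ) < (k:ℝ)+4 := by positivity
    have hb4 : b (k+4) = Real.log (((k:ℝ)+3)+1) * (((k:ℝ)+3)+1) ^ (-σ) := by
      rw [hbdef]; dsimp only
      rw [if_neg (by omega), Real.rpow_neg (by positivity : (0:ℝ) ≤ ((k:ℝ)+3)+1)]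
      push_cast
      rw [show ((k:ℝ)+3)+1 = (k:ℝ)+4 by ring]
      ring
    have hv1 : v (k+1) = (((k:ℝ)+3)+1) ^ (1-σ) * Real.log (((k:ℝ)+3)+1) / (σ-1)
        + (((k:ℝ)+3)+1) ^ (1-σ) / (σ-1)^2 := by
      rw [hvdef]; dsimp only; push_cast; ring_nf
    rw [hb4, hv1]
    exact step_B σ h1 hx
  have hb_nonneg : ∀ n, 0 ≤ b n := by
    intro n
    rw [hbdef]; dsimp only; split
    · exact le_refl 0
    · exact div_nonneg (Real.log_natCast_nonneg n) (Real.rpow_nonneg (Nat.cast_nonneg n) σ)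
  have hv_anti : ∀ k, v (k+1) ≤ v k := by
    intro k
    have := hstepB k
    have h0 := hb_nonneg (k+4)
    linarith
  have hvten : Filter.Tendsto v Filter.atTop (nhds 0) := by
    have hc : Filter.Tendsto (fun k:ℕ => (k:ℝ)+3) Filter.atTop Filter.atTop :=
      Filter.tendsto_atTop_add_const_right _ _ tendsto_natCast_atTop_atTop
    have hlo : Filter.Tendsto (fun x:ℝ => Real.log x / x^(σ-1)) Filter.atTop (nhds 0) :=
      (isLittleO_log_rpow_atTop hε).tendsto_div_nhds_zero
    have h1' := (hlo.comp hc).div_const (σ-1)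
    have h2' := ((tendsto_rpow_neg_atTop hε).comp hc).div_const ((σ-1)^2)
    have hfun : v = fun k : ℕ => (Real.log ((k:ℝ)+3) / ((k:ℝ)+3)^(σ-1)) / (σ-1)
        + ((k:ℝ)+3) ^ (-(σ-1)) / (σ-1)^2 := by
      funext k
      rw [hvdef]; dsimp only
      have hx : (0:ℝ) < (k:ℝ)+3 := by positivity
      rw [show (1:ℝ)-σ = -(σ-1) by ring, Real.rpow_neg hx.le]
      rw [div_eq_mul_inv (Real.log ((k:ℝ)+3))]
      ring
    rw [hfun]
    have := h1'.add h2'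
    simpa using this
  have htelB : HasSum (fun k => v k - v (k+1)) (v 0) := hasSum_telescope_of_nonneg hv_anti hvten
  have hBtail : ∑' k, b (k+4) ≤ v 0 := by
    rw [← htelB.tsum_eq]
    exact ((summable_nat_add_iff 4).mpr hsb).tsum_le_tsum hstepB htelB.summable
  have hBup : B ≤ Real.log 2 / (2:ℝ)^σ + Real.log 3 / (3:ℝ)^σ
      + ((3:ℝ) ^ (1-σ) * Real.log 3 / (σ-1) + (3:ℝ) ^ (1-σ) / (σ-1)^2) := by
    have hsplit := Summable.sum_add_tsum_nat_add 4 hsb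
    have hb03 : ∑ i ∈ Finset.range 4, b i
        = Real.log 2 / (2:ℝ)^σ + Real.log 3 / (3:ℝ)^σ := by
      rw [hbdef]
      simp [Finset.sum_range_succ]
    have hv0 : v 0 = (3:ℝ) ^ (1-σ) * Real.log 3 / (σ-1) + (3:ℝ) ^ (1-σ) / (σ-1)^2 := by
      rw [hvdef]; norm_num
    rw [hBdef, ← hsplit, hb03, ← hv0]
    exact add_le_add_right hBtail _
  -- conclusion
  have hfinal : A < 1 / (σ-1) := key_real σ h1 h2 hBAZ hA0 hZlow hBup
  exact lt_of_le_of_lt hAbound hfinal
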